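/- Let (Ω, P) be a probability space and let u : Ω → ℝ^n and v : Ω → ℝ^M be random vectors such that all entrywise products u_i u_j, u_i v_k, and v_k v_l are integrable. Set F = E[u uᵀ] ∈ ℝ^{n×n}, S = E[v vᵀ] ∈ ℝ^{M×M}, and let Φ ∈ ℝ^{M×n} be the matrix with Φᵀ = E[u vᵀ]. If S is positive definite, then Φᵀ S⁻¹ Φ ⪯ F in the Loewner order, i.e., F − Φᵀ S⁻¹ Φ is positive semidefinite. -/

import Mathlib

open MeasureTheory Matrix

lemma aux_prod_sum_integrable {Ω : Type*} [MeasurableSpace Ω] (P : Measure Ω)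
    {ι κ : Type*} [Fintype ι] [Fintype κ]
    (c : ι → ℝ) (d : κ → ℝ) (g : Ω → ι → ℝ) (h : Ω → κ → ℝ)
    (hint : ∀ i k, Integrable (fun ω => g ω i * h ω k) P) :
    Integrable (fun ω => (∑ i, c i * g ω i) * (∑ k, d k * h ω k)) P := by
  have hrw : ∀ ω, (∑ i, c i * g ω i) * (∑ k, d k * h ω k)
      = ∑ i, ∑ k, c i * d k * (g ω i * h ω k) := by
    intro ω; rw [Finset.sum_mul_sum]
    exact Finset.sum_congr rfl fun i _ => Finset.sum_congr rfl fun k _ => by ring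
  simp only [hrw]
  exact integrable_finset_sum _ fun i _ =>
    integrable_finset_sum _ fun k _ => (hint i k).const_mul _

lemma aux_prod_sum_integral {Ω : Type*} [MeasurableSpace Ω] (P : Measure Ω)
    {ι κ : Type*} [Fintype ι] [Fintype κ]
    (c : ι → ℝ) (d : κ → ℝ) (g : Ω → ι → ℝ) (h : Ω → κ → ℝ)
    (hint : ∀ i k, Integrable (fun ω => g ω i * h ω k) P) :
    ∫ ω, (∑ i, c i * g ω i) * (∑ k, d k * h ω k) ∂P
      = ∑ i, ∑ k, c i * d k * ∫ ω, g ω i * h ω k ∂P := by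
  have hrw : ∀ ω, (∑ i, c i * g ω i) * (∑ k, d k * h ω k)
      = ∑ i, ∑ k, c i * d k * (g ω i * h ω k) := by
    intro ω; rw [Finset.sum_mul_sum]
    exact Finset.sum_congr rfl fun i _ => Finset.sum_congr rfl fun k _ => by ring
  simp only [hrw]
  rw [integral_finset_sum _ fun i _ =>
    integrable_finset_sum _ fun k _ => (hint i k).const_mul _]
  refine Finset.sum_congr rfl fun i _ => ?_
  rw [integral_finset_sum _ fun k _ => (hint i k).const_mul _]
  exact Finset.sum_congr rfl fun k _ => (MeasureTheory.integral_const_mul _ _)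

/-- Theorem 1 (Pearson information bound): with F = E[uuᵀ], S = E[vvᵀ], Φᵀ = E[uvᵀ],
if S is positive definite then Φᵀ S⁻¹ Φ ⪯ F in the Loewner order. -/
theorem pearson_information_lower_bound
    {Ω : Type*} [MeasurableSpace Ω] (P : Measure Ω) [IsProbabilityMeasure P]
    {n M : ℕ} (u : Ω → Fin n → ℝ) (v : Ω → Fin M → ℝ)
    (huu : ∀ i j, Integrable (fun ω => u ω i * u ω j) P)
    (huv : ∀ i k, Integrable (fun ω => u ω i * v ω k) P)
    (hvv : ∀ k l, Integrable (fun ω => v ω k * v ω l) P)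
    (F : Matrix (Fin n) (Fin n) ℝ) (S : Matrix (Fin M) (Fin M) ℝ)
    (Φ : Matrix (Fin M) (Fin n) ℝ)
    (hF : F = Matrix.of fun i j => ∫ ω, u ω i * u ω j ∂P)
    (hS : S = Matrix.of fun k l => ∫ ω, v ω k * v ω l ∂P)
    (hΦ : Φᵀ = Matrix.of fun i k => ∫ ω, u ω i * v ω k ∂P)
    (hSpd : S.PosDef) :
    (F - Φᵀ * S⁻¹ * Φ).PosSemidef := by
  have hSdet : IsUnit S.det := isUnit_iff_ne_zero.mpr hSpd.det_pos.ne'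
  have hSinv : S⁻¹.IsHermitian := hSpd.1.inv
  rw [posSemidef_iff_dotProduct_mulVec]
  constructor
  · -- Hermitian
    have hFh : F.IsHermitian := by
      rw [hF]; ext i j
      simp only [IsHermitian, conjTranspose, Matrix.map_apply, transpose_apply, of_apply,
        star_trivial] at *
      simp [Matrix.conjTranspose_apply, Matrix.of_apply, mul_comm]
    refine hFh.sub ?_
    have : (Φᵀ * S⁻¹ * Φ)ᴴ = Φᵀ * S⁻¹ * Φ := by
      rw [conjTranspose_mul, conjTranspose_mul, hSinv.eq]
      simp [Matrix.mul_assoc]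
    exact this
  · intro x
    set w : Fin M → ℝ := Φ *ᵥ x with hw
    set y : Fin M → ℝ := S⁻¹ *ᵥ w with hy
    -- scalar random variables
    set a : Ω → ℝ := fun ω => ∑ i, x i * u ω i with ha
    set b : Ω → ℝ := fun ω => ∑ k, y k * v ω k with hb
    have haa : Integrable (fun ω => a ω * a ω) P :=
      aux_prod_sum_integrable P x x u u huu
    have hab : Integrable (fun ω => a ω * b ω) P :=
      aux_prod_sum_integrable P x y u v huv
    have hbb : Integrable (fun ω => b ω * b ω) P :=
      aux_prod_sum_integrable P y y v v hvv
    have hIaa : ∫ ω, a ω * a ω ∂P = x ⬝ᵥ F *ᵥ x := by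
      rw [aux_prod_sum_integral P x x u u huu, hF]
      simp only [dotProduct, mulVec, of_apply, Finset.mul_sum]
      exact Finset.sum_congr rfl fun i _ => Finset.sum_congr rfl fun j _ => by ring
    have hIab : ∫ ω, a ω * b ω ∂P = x ⬝ᵥ Φᵀ *ᵥ y := by
      rw [aux_prod_sum_integral P x y u v huv, hΦ]
      simp only [dotProduct, mulVec, of_apply, Finset.mul_sum]
      exact Finset.sum_congr rfl fun i _ => Finset.sum_congr rfl fun k _ => by ring
    have hIbb : ∫ ω, b ω * b ω ∂P = y ⬝ᵥ S *ᵥ y := by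
      rw [aux_prod_sum_integral P y y v v hvv, hS]
      simp only [dotProduct, mulVec, of_apply, Finset.mul_sum]
      exact Finset.sum_congr rfl fun k _ => Finset.sum_congr rfl fun l _ => by ring
    have hnn : (0:ℝ) ≤ ∫ ω, (a ω - b ω) * (a ω - b ω) ∂P :=
      integral_nonneg fun ω => mul_self_nonneg _
    have hexp : ∫ ω, (a ω - b ω) * (a ω - b ω) ∂P
        = (x ⬝ᵥ F *ᵥ x) - 2 * (x ⬝ᵥ Φᵀ *ᵥ y) + (y ⬝ᵥ S *ᵥ y) := by
      have : (fun ω => (a ω - b ω) * (a ω - b ω))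
          = fun ω => (a ω * a ω + b ω * b ω) - 2 * (a ω * b ω) := by
        funext ω; ring
      rw [this,
        integral_sub (f := fun ω => a ω * a ω + b ω * b ω)
          (g := fun ω => 2 * (a ω * b ω)) (haa.add hbb) (hab.const_mul 2),
        integral_add (f := fun ω => a ω * a ω) (g := fun ω => b ω * b ω) haa hbb,
        MeasureTheory.integral_const_mul, hIaa, hIab, hIbb]
      ring
    -- matrix identities
    have hSy : S *ᵥ y = w := by
      rw [hy, mulVec_mulVec, Matrix.mul_nonsing_inv S hSdet, one_mulVec]
    have hYZ : x ⬝ᵥ Φᵀ *ᵥ y = y ⬝ᵥ S *ᵥ y := by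
      rw [hSy, Matrix.dotProduct_mulVec x Φᵀ y, vecMul_transpose, ← hw, dotProduct_comm]
    have hquad : x ⬝ᵥ (F - Φᵀ * S⁻¹ * Φ) *ᵥ x
        = (x ⬝ᵥ F *ᵥ x) - 2 * (x ⬝ᵥ Φᵀ *ᵥ y) + (y ⬝ᵥ S *ᵥ y) := by
      have h1 : (Φᵀ * S⁻¹ * Φ) *ᵥ x = Φᵀ *ᵥ y := by
        rw [hy, hw, ← mulVec_mulVec, ← mulVec_mulVec]
      rw [sub_mulVec, dotProduct_sub, h1, hYZ]
      ring
    simp only [star_trivial]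
    rw [hquad, ← hexp]
    exact hnn
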